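/- Any two flattenings of a non-degenerate generalised bi-infinite walk in a digraph D are translations of each other: if w₀ and w₁ are both flattenings of w, then there exists n ∈ Z such that w₁ = σⁿ ∘ w₀, where σ is the shift automorphism of the bi-infinite path digraph. -/

import Mathlib

structure Digraph' where
  V : Type
  E : Type
  s : E → V
  t : E → V

structure DHom (D₁ D₂ : Digraph') where
  vMap : D₁.V → D₂.V
  eMap : D₁.E → D₂.E
  hs : ∀ e, D₂.s (eMap e) = vMap (D₁.s e)
  ht : ∀ e, D₂.t (eMap e) = vMap (D₁.t e)

def BiWalk (D : Digraph') : Type :=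
  { f : ℤ → D.E // ∀ i : ℤ, D.t (f i) = D.s (f (i + 1)) }

def biMap {D₁ D₂ : Digraph'} (φ : DHom D₁ D₂) (w : BiWalk D₁) : BiWalk D₂ :=
  ⟨fun i => φ.eMap (w.1 i), fun i => by rw [φ.ht, φ.hs, w.2 i]⟩

structure FwdWalk (D : Digraph') where
  ed : ℕ → D.E
  chain : ∀ i : ℕ, D.t (ed i) = D.s (ed (i + 1))

structure BwdWalk (D : Digraph') where
  ed : ℕ → D.E
  chain : ∀ i : ℕ, D.t (ed (i + 1)) = D.s (ed i)

/-- UDAF digraph condition: for each vertex, the number of infinite forwards walks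
from it and of infinite backwards walks to it are each `≠ 1`. -/
def IsUDAF (D : Digraph') : Prop :=
  (∀ v : D.V, ¬∃! p : FwdWalk D, D.s (p.ed 0) = v) ∧
  (∀ v : D.V, ¬∃! p : BwdWalk D, D.t (p.ed 0) = v)

/-- A generalised bi-infinite walk in `D`, recorded by its vertex sequence and,
for each `z`, the finite walk (a length and a chained list of edges) labelling the
edge `(z, z+1)`. -/
structure GBW (D : Digraph') where
  vert : ℤ → D.V
  len : ℤ → ℕ
  ed : ∀ z : ℤ, Fin (len z) → D.E
  hchain : ∀ (z : ℤ) (i : Fin (len z)) (h : (i : ℕ) + 1 < len z),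
    D.t (ed z i) = D.s (ed z ⟨(i : ℕ) + 1, h⟩)
  hfirst : ∀ (z : ℤ) (h : 0 < len z), D.s (ed z ⟨0, h⟩) = vert z
  hlast : ∀ (z : ℤ) (h : 0 < len z), D.t (ed z ⟨len z - 1, by omega⟩) = vert (z + 1)
  hnil : ∀ z : ℤ, len z = 0 → vert (z + 1) = vert z

/-- `w₀` is a flattening of the generalised bi-infinite walk `w`. -/
def IsFlat (D : Digraph') (w : GBW D) (w₀ : BiWalk D) : Prop :=
  ∃ f : ℤ → ℤ, (∀ z : ℤ, f (z + 1) = f z + w.len z) ∧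
    ∀ (z : ℤ) (i : Fin (w.len z)), w₀.1 (f z + (i : ℕ)) = w.ed z i

/-- Any two flattenings of a non-degenerate generalised bi-infinite walk are
translations of each other. -/
theorem stmt2 (D : Digraph') [Fintype D.V] [Fintype D.E] (w : GBW D)
    (hnd : ¬ ((∃ z : ℤ, ∀ n : ℤ, z < n → w.len n = 0) ∨
      (∃ z : ℤ, ∀ n : ℤ, n < z → w.len n = 0)))
    (w₀ w₁ : BiWalk D) (h₀ : IsFlat D w w₀) (h₁ : IsFlat D w w₁) :
    ∃ n : ℤ, ∀ i : ℤ, w₁.1 i = w₀.1 (i + n) := by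
  obtain ⟨f₀, hf₀, he₀⟩ := h₀
  obtain ⟨f₁, hf₁, he₁⟩ := h₁
  push_neg at hnd
  obtain ⟨hfwd, hbwd⟩ := hnd
  -- the difference f₀ - f₁ is constant
  have hdiff : ∀ z : ℤ, f₀ z = f₁ z + (f₀ 0 - f₁ 0) := by
    intro z
    induction z using Int.induction_on with
    | zero => ring
    | succ k ih => rw [hf₀, hf₁, ih]; ring
    | pred k ih =>
        have h0 := hf₀ (-(k:ℤ) - 1)
        have h1 := hf₁ (-(k:ℤ) - 1)
        simp only [sub_add_cancel] at h0 h1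
        omega
  -- f₁ is monotone
  have hmono : ∀ z z' : ℤ, z ≤ z' → f₁ z ≤ f₁ z' := by
    have key : ∀ (k : ℕ) (z : ℤ), f₁ z ≤ f₁ (z + k) := by
      intro k
      induction k with
      | zero => intro z; simp
      | succ m ih =>
          intro z
          have := hf₁ (z + m)
          have h2 : z + (↑(m + 1) : ℤ) = (z + m) + 1 := by push_cast; ring
          rw [h2, this]
          have := ih z
          omega
    intro z z' hzz
    have := key (z' - z).toNat z
    rwa [Int.toNat_of_nonneg (by omega), add_sub_cancel] at this
  -- f₁ is unbounded below
  have hdown : ∀ m : ℤ, ∃ z, f₁ z ≤ m := by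
    have key : ∀ k : ℕ, ∃ z, f₁ z ≤ f₁ 0 - k := by
      intro k
      induction k with
      | zero => exact ⟨0, by simp⟩
      | succ m ih =>
          obtain ⟨z, hz⟩ := ih
          obtain ⟨n', hn', hlen⟩ := hbwd z
          refine ⟨n', ?_⟩
          have h1 := hf₁ n'
          have h2 := hmono (n' + 1) z (by omega)
          have : (1 : ℤ) ≤ w.len n' := by
            have : w.len n' ≠ 0 := hlen
            omega
          push_cast
          omega
    intro m
    obtain ⟨z, hz⟩ := key (f₁ 0 - m).toNat
    exact ⟨z, by omega⟩
  -- f₁ is unbounded above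
  have hup : ∀ m : ℤ, ∃ z, m < f₁ z := by
    have key : ∀ k : ℕ, ∃ z, f₁ 0 + k ≤ f₁ z := by
      intro k
      induction k with
      | zero => exact ⟨0, by simp⟩
      | succ m ih =>
          obtain ⟨z, hz⟩ := ih
          obtain ⟨n', hn', hlen⟩ := hfwd z
          refine ⟨n' + 1, ?_⟩
          have h1 := hf₁ n'
          have h2 := hmono z n' (by omega)
          have : (1 : ℤ) ≤ w.len n' := by
            have : w.len n' ≠ 0 := hlen
            omega
          push_cast
          omega
    intro m
    obtain ⟨z, hz⟩ := key (m - f₁ 0 + 1).toNat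
    refine ⟨z, ?_⟩
    have := Int.self_le_toNat (m - f₁ 0 + 1)
    omega
  -- crossing lemma: every integer lies in some block of f₁
  have hcross : ∀ i : ℤ, ∃ z, f₁ z ≤ i ∧ i < f₁ (z + 1) := by
    intro i
    obtain ⟨z₁, hz₁⟩ := hdown i
    obtain ⟨z₂, hz₂⟩ := hup i
    have key : ∀ (k : ℕ) (z : ℤ), f₁ z ≤ i → i < f₁ (z + k) →
        ∃ z', f₁ z' ≤ i ∧ i < f₁ (z' + 1) := by
      intro k
      induction k with
      | zero => intro z h1 h2; simp at h2; omega
      | succ m ih =>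
          intro z h1 h2
          by_cases hc : i < f₁ (z + 1)
          · exact ⟨z, h1, hc⟩
          · refine ih (z + 1) (by omega) ?_
            have : z + 1 + (m : ℤ) = z + ((m : ℕ) + 1 : ℕ) := by push_cast; ring
            rw [this]; exact h2
    have hz12 : z₁ ≤ z₂ := by
      by_contra hcon
      have := hmono z₂ z₁ (by omega)
      omega
    refine key (z₂ - z₁).toNat z₁ hz₁ ?_
    rw [Int.toNat_of_nonneg (by omega), add_sub_cancel]
    exact hz₂
  refine ⟨f₀ 0 - f₁ 0, fun i => ?_⟩
  obtain ⟨z, h1, h2⟩ := hcross i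
  rw [hf₁ z] at h2
  have hj : (i - f₁ z).toNat < w.len z := by
    have := Int.toNat_of_nonneg (show (0:ℤ) ≤ i - f₁ z by omega)
    omega
  have hi1 : f₁ z + (((i - f₁ z).toNat : ℕ) : ℤ) = i := by
    simp only [Int.toNat_of_nonneg (show (0:ℤ) ≤ i - f₁ z by omega)]
    ring
  have e1 := he₁ z (⟨(i - f₁ z).toNat, hj⟩ : Fin (w.len z))
  simp only [hi1] at e1
  have e0 := he₀ z (⟨(i - f₁ z).toNat, hj⟩ : Fin (w.len z))
  rw [e1, ← e0, hdiff z]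
  simp only [Int.toNat_of_nonneg (show (0:ℤ) ≤ i - f₁ z by omega)]
  ring
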